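/- Let G be a finite group, H a subgroup of G, and A a normal subgroup of G with H ≤ A ≤ G. Then A is a perfect code of the pair (G,H) if and only if G = A·N_G(H) and for every x ∈ G with x² ∈ A there exists b ∈ A such that xb ∈ N_G(H) and (xb)² ∈ H. -/

import Mathlib

open scoped Pointwise

/-- A subset `C` of the vertices of a graph `Γ` is an `(r,s)`-regular set if every vertex
in `C` has exactly `r` neighbours in `C` and every vertex outside `C` has exactly `s`
neighbours in `C`. -/
def IsRegularVertexSet {V : Type*} (Γ : SimpleGraph V) (C : Set V) (r s : ℕ) : Prop :=
  (∀ v ∈ C, {w | w ∈ C ∧ Γ.Adj v w}.ncard = r) ∧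
  ∀ v ∉ C, {w | w ∈ C ∧ Γ.Adj v w}.ncard = s

/-- The coset graph `Cos(G,H,U)` on the left cosets of `H` in `G`:
`g₁H` and `g₂H` are adjacent iff `g₁⁻¹ g₂ ∈ U`. -/
def cosetGraph {G : Type*} [Group G] (H : Subgroup G) (U : Set G) : SimpleGraph (G ⧸ H) :=
  SimpleGraph.fromRel fun C D =>
    ∃ g₁ g₂ : G, QuotientGroup.mk g₁ = C ∧ QuotientGroup.mk g₂ = D ∧ g₁⁻¹ * g₂ ∈ U

/-- `U` is a valid connection set for a coset graph `Cos(G,H,U)`: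
inverse-closed, disjoint from `H`, and a union of double cosets of `H` (`HUH = U`). -/
def IsCosetGraphConnectionSet {G : Type*} [Group G] (H : Subgroup G) (U : Set G) : Prop :=
  U⁻¹ = U ∧ (H : Set G) ∩ U = ∅ ∧ (H : Set G) * U * (H : Set G) = U

/-- `A` is an `(r,s)`-regular set of the pair `(G,H)`: there is a coset graph
`Cos(G,H,U)` in which the set of left cosets of `H` in `A` is an `(r,s)`-regular set. -/
def IsRegularSetOfPair {G : Type*} [Group G] (H A : Subgroup G) (r s : ℕ) : Prop :=
  ∃ U : Set G, IsCosetGraphConnectionSet H U ∧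
    IsRegularVertexSet (cosetGraph H U)
      {C : G ⧸ H | ∃ a ∈ A, QuotientGroup.mk a = C} r s

/-- `A` is a perfect code of the pair `(G,H)` iff it is a `(0,1)`-regular set of `(G,H)`. -/
def IsPerfectCodeOfPair {G : Type*} [Group G] (H A : Subgroup G) : Prop :=
  IsRegularSetOfPair H A 0 1

/-- A subgroup `A` is an `(r,s)`-regular set of `G` iff it is an `(r,s)`-regular set of
the pair `(G,1)`, i.e. an `(r,s)`-regular set in some Cayley graph of `G`. -/
def IsRegularSetOfGroup {G : Type*} [Group G] (A : Subgroup G) (r s : ℕ) : Prop :=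
  IsRegularSetOfPair ⊥ A r s

/-- A subgroup `A` is a perfect code of `G` iff it is a `(0,1)`-regular set of `G`. -/
def IsPerfectCodeOfGroup {G : Type*} [Group G] (A : Subgroup G) : Prop :=
  IsRegularSetOfGroup A 0 1

/-- The conjugate subgroup `K^t = t⁻¹ K t`. -/
def conjSub {G : Type*} [Group G] (K : Subgroup G) (t : G) : Subgroup G :=
  K.map (MulAut.conj t⁻¹).toMonoidHom


section Helpers

variable {G : Type*} [Group G] {H : Subgroup G}

lemma mem_U_of_rel {U : Set G} (hmul : (H : Set G) * U * (H : Set G) = U)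
    {g₁ g₂ x y : G} (h₁ : (QuotientGroup.mk g₁ : G ⧸ H) = QuotientGroup.mk x)
    (h₂ : (QuotientGroup.mk g₂ : G ⧸ H) = QuotientGroup.mk y)
    (hu : g₁⁻¹ * g₂ ∈ U) : x⁻¹ * y ∈ U := by
  have e1 : g₁⁻¹ * x ∈ H := QuotientGroup.eq.mp h₁
  have e2 : g₂⁻¹ * y ∈ H := QuotientGroup.eq.mp h₂
  have : x⁻¹ * y = (g₁⁻¹ * x)⁻¹ * (g₁⁻¹ * g₂) * (g₂⁻¹ * y) := by group
  rw [this, ← hmul]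
  exact Set.mul_mem_mul (Set.mul_mem_mul (inv_mem e1) hu) e2

lemma cosetGraph_adj {U : Set G} (hU : IsCosetGraphConnectionSet H U) (x y : G) :
    (cosetGraph H U).Adj (QuotientGroup.mk x) (QuotientGroup.mk y) ↔
      (QuotientGroup.mk x : G ⧸ H) ≠ QuotientGroup.mk y ∧ x⁻¹ * y ∈ U := by
  obtain ⟨hinv, hdisj, hmul⟩ := hU
  constructor
  · rintro ⟨hne, h | h⟩
    · obtain ⟨g₁, g₂, h₁, h₂, hu⟩ := h
      exact ⟨hne, mem_U_of_rel hmul h₁ h₂ hu⟩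
    · obtain ⟨g₁, g₂, h₁, h₂, hu⟩ := h
      have := mem_U_of_rel hmul h₁ h₂ hu
      refine ⟨hne, ?_⟩
      rw [← hinv, Set.mem_inv]
      simpa using this
  · rintro ⟨hne, hu⟩
    exact ⟨hne, Or.inl ⟨x, y, rfl, rfl, hu⟩⟩

lemma mem_codeSet {A : Subgroup G} (hHA : H ≤ A) (g : G) :
    (QuotientGroup.mk g ∈ {C : G ⧸ H | ∃ a ∈ A, QuotientGroup.mk a = C}) ↔ g ∈ A := by
  constructor
  · rintro ⟨a, ha, hEq⟩
    have h1 : a⁻¹ * g ∈ H := QuotientGroup.eq.mp hEq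
    have : g = a * (a⁻¹ * g) := by group
    rw [this]
    exact mul_mem ha (hHA h1)
  · intro hg; exact ⟨g, hg, rfl⟩

lemma mem_normalizer_of_conj [Finite G] {x : G}
    (h : ∀ n ∈ H, x * n * x⁻¹ ∈ H) : x ∈ Subgroup.normalizer (H : Set G) :=
  Subgroup.mem_normalizer_fintype h

lemma conj_mem_of_normalizer {n h : G} (hn : n ∈ Subgroup.normalizer (H : Set G)) (hh : h ∈ H) :
    n⁻¹ * h * n ∈ H := by
  have := (Subgroup.mem_normalizer_iff.mp (inv_mem hn) h).mp hh
  simpa using this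

end Helpers

/-- **Corollary D.** Let `H ≤ A ≤ G` with `A` normal in `G`. Then `A` is a perfect code
of `(G,H)` iff `G = A·N_G(H)` and for every `x ∈ G` with `x² ∈ A` there exists `b ∈ A`
such that `xb ∈ N_G(H)` and `(xb)² ∈ H`. -/
theorem corollaryD {G : Type*} [Group G] [Fintype G] (H A : Subgroup G)
    (hHA : H ≤ A) (hAnG : A.Normal) :
    IsPerfectCodeOfPair H A ↔
      (A : Set G) * (Subgroup.normalizer (H : Set G) : Set G) = Set.univ ∧
        ∀ x : G, x ^ 2 ∈ A → ∃ b ∈ A, x * b ∈ Subgroup.normalizer (H : Set G) ∧ (x * b) ^ 2 ∈ H := by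
  classical
  constructor
  · rintro ⟨U, hU, hcode⟩
    obtain ⟨hinv, hdisj, hmul⟩ := id hU
    have key : ∀ g : G, g ∉ A → ∃ a ∈ A, g⁻¹ * a ∈ U ∧
        ∀ y ∈ A, g⁻¹ * y ∈ U →
          (QuotientGroup.mk y : G ⧸ H) = QuotientGroup.mk a := by
      intro g hg
      have hvS : (QuotientGroup.mk g : G ⧸ H) ∉
          {C : G ⧸ H | ∃ a ∈ A, QuotientGroup.mk a = C} :=
        fun h => hg ((mem_codeSet hHA g).mp h)
      have h1 := hcode.2 _ hvS
      obtain ⟨w₀, hw₀⟩ := Set.ncard_eq_one.mp h1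
      have hw₀mem : w₀ ∈ {w | w ∈ {C : G ⧸ H | ∃ a ∈ A, QuotientGroup.mk a = C} ∧
          (cosetGraph H U).Adj (QuotientGroup.mk g) w} := by
        rw [hw₀]; exact Set.mem_singleton w₀
      obtain ⟨hwS, hwadj⟩ := hw₀mem
      obtain ⟨a, ha, rfl⟩ := hwS
      have hu : g⁻¹ * a ∈ U := ((cosetGraph_adj hU g a).mp hwadj).2
      refine ⟨a, ha, hu, ?_⟩
      intro y hy hyU
      have hne : (QuotientGroup.mk g : G ⧸ H) ≠ QuotientGroup.mk y := by
        intro hEq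
        have h2 : g⁻¹ * y ∈ (H : Set G) ∩ U := ⟨QuotientGroup.eq.mp hEq, hyU⟩
        rw [hdisj] at h2; exact h2
      have hmem : (QuotientGroup.mk y : G ⧸ H) ∈
          {w | w ∈ {C : G ⧸ H | ∃ a ∈ A, QuotientGroup.mk a = C} ∧
            (cosetGraph H U).Adj (QuotientGroup.mk g) w} :=
        ⟨(mem_codeSet hHA y).mpr hy, (cosetGraph_adj hU g y).mpr ⟨hne, hyU⟩⟩
      rw [hw₀] at hmem; exact hmem
    have keyN : ∀ g : G, g ∉ A → ∀ a ∈ A, g⁻¹ * a ∈ U →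
        (∀ y ∈ A, g⁻¹ * y ∈ U →
          (QuotientGroup.mk y : G ⧸ H) = QuotientGroup.mk a) →
        (g⁻¹ * a)⁻¹ ∈ Subgroup.normalizer (H : Set G) := by
      intro g hg a ha hu huniq
      apply mem_normalizer_of_conj
      intro n hn
      have hn' : n⁻¹ ∈ H := inv_mem hn
      have ha' : g * (n⁻¹ * (g⁻¹ * a)) ∈ A := by
        have e : g * (n⁻¹ * (g⁻¹ * a)) = (g * n⁻¹ * g⁻¹) * a := by group
        rw [e]
        exact mul_mem (hAnG.conj_mem _ (hHA hn') g) ha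
      have hU' : g⁻¹ * (g * (n⁻¹ * (g⁻¹ * a))) ∈ U := by
        have e : g⁻¹ * (g * (n⁻¹ * (g⁻¹ * a))) = n⁻¹ * (g⁻¹ * a) * 1 := by group
        rw [e, ← hmul]
        exact Set.mul_mem_mul (Set.mul_mem_mul hn' hu) (one_mem H)
      have hH : (g * (n⁻¹ * (g⁻¹ * a)))⁻¹ * a ∈ H :=
        QuotientGroup.eq.mp (huniq _ ha' hU')
      have e2 : (g * (n⁻¹ * (g⁻¹ * a)))⁻¹ * a =
          (g⁻¹ * a)⁻¹ * n * (g⁻¹ * a) := by group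
      rw [e2] at hH
      simpa only [inv_inv] using hH
    refine ⟨?_, ?_⟩
    · apply Set.eq_univ_of_forall
      intro g
      by_cases hg : g ∈ A
      · exact Set.mem_mul.mpr ⟨g, hg, 1, one_mem _, mul_one g⟩
      · obtain ⟨a, ha, hu, huniq⟩ := key g hg
        exact Set.mem_mul.mpr ⟨a, ha, (g⁻¹ * a)⁻¹, keyN g hg a ha hu huniq, by group⟩
    · intro x hx2
      by_cases hx : x ∈ A
      · refine ⟨x⁻¹, inv_mem hx, ?_, ?_⟩
        · rw [mul_inv_cancel]; exact one_mem _
        · rw [mul_inv_cancel, one_pow]; exact one_mem _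
      · obtain ⟨a, ha, huU, huniq⟩ := key x hx
        have hNinv : (x⁻¹ * a)⁻¹ ∈ Subgroup.normalizer (H : Set G) := keyN x hx a ha huU huniq
        have hu'A : (x⁻¹ * a)⁻¹ ∉ A := by
          intro h
          have e : x = a * (x⁻¹ * a)⁻¹ := by group
          exact hx (e ▸ mul_mem ha h)
        obtain ⟨a₂, ha₂, _, huniq₂⟩ := key ((x⁻¹ * a)⁻¹) hu'A
        have h1 : ((x⁻¹ * a)⁻¹)⁻¹ * 1 ∈ U := by
          have e : ((x⁻¹ * a)⁻¹)⁻¹ * 1 = x⁻¹ * a := by group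
          rw [e]; exact huU
        have m1 := huniq₂ 1 (one_mem A) h1
        have huInv : (x⁻¹ * a)⁻¹ ∈ U := by
          rw [← hinv, Set.mem_inv]; simpa using huU
        have h2mem : (x⁻¹ * a)⁻¹ * (x⁻¹ * a)⁻¹ ∈ A := by
          have e : (x⁻¹ * a)⁻¹ * (x⁻¹ * a)⁻¹ =
              a⁻¹ * (x * a⁻¹ * x⁻¹) * (x ^ 2) := by group
          rw [e]
          exact mul_mem (mul_mem (inv_mem ha) (hAnG.conj_mem _ (inv_mem ha) x)) hx2
        have h2U : ((x⁻¹ * a)⁻¹)⁻¹ * ((x⁻¹ * a)⁻¹ * (x⁻¹ * a)⁻¹) ∈ U := by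
          have e : ((x⁻¹ * a)⁻¹)⁻¹ * ((x⁻¹ * a)⁻¹ * (x⁻¹ * a)⁻¹) = (x⁻¹ * a)⁻¹ := by
            group
          rw [e]; exact huInv
        have m2 := huniq₂ _ h2mem h2U
        have hEq : (QuotientGroup.mk ((x⁻¹ * a)⁻¹ * (x⁻¹ * a)⁻¹) : G ⧸ H) =
            QuotientGroup.mk 1 := m2.trans m1.symm
        have hsq : ((x⁻¹ * a)⁻¹ * (x⁻¹ * a)⁻¹)⁻¹ * 1 ∈ H := QuotientGroup.eq.mp hEq
        have hsqH : (x⁻¹ * a)⁻¹ * (x⁻¹ * a)⁻¹ ∈ H := by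
          have := inv_mem hsq; simpa using this
        refine ⟨x⁻¹ * (x⁻¹ * a)⁻¹, ?_, ?_, ?_⟩
        · have e : x⁻¹ * (x⁻¹ * a)⁻¹ = x⁻¹ * a⁻¹ * (x⁻¹)⁻¹ := by group
          rw [e]; exact hAnG.conj_mem _ (inv_mem ha) x⁻¹
        · have e : x * (x⁻¹ * (x⁻¹ * a)⁻¹) = (x⁻¹ * a)⁻¹ := by group
          rw [e]; exact hNinv
        · have e : (x * (x⁻¹ * (x⁻¹ * a)⁻¹)) ^ 2 =
              (x⁻¹ * a)⁻¹ * (x⁻¹ * a)⁻¹ := by rw [sq]; group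
          rw [e]; exact hsqH
  · rintro ⟨hGen, h2⟩
    haveI := hAnG
    haveI : Fintype (G ⧸ A) := Fintype.ofFinite _
    letI : LinearOrder (G ⧸ A) :=
      LinearOrder.lift' (Fintype.equivFin (G ⧸ A)) (Equiv.injective _)
    have hs0 : ∀ q : G ⧸ A, ∃ n : G, n ∈ Subgroup.normalizer (H : Set G) ∧
        (QuotientGroup.mk n : G ⧸ A) = q := by
      intro q
      obtain ⟨g, rfl⟩ := QuotientGroup.mk_surjective q
      have hg : g ∈ (A : Set G) * (Subgroup.normalizer (H : Set G) : Set G) := by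
        rw [hGen]; exact Set.mem_univ g
      obtain ⟨a, ha, n, hn, rfl⟩ := Set.mem_mul.mp hg
      refine ⟨n, hn, ?_⟩
      symm
      rw [QuotientGroup.mk_mul, (QuotientGroup.eq_one_iff a).mpr ha, one_mul]
    choose s hsN hsQ using hs0
    have hi0 : ∀ q : G ⧸ A, q ^ 2 = 1 → ∃ n : G, n ∈ Subgroup.normalizer (H : Set G) ∧ n * n ∈ H ∧
        (QuotientGroup.mk n : G ⧸ A) = q := by
      intro q hq
      obtain ⟨x, rfl⟩ := QuotientGroup.mk_surjective q
      have hx2 : x ^ 2 ∈ A := by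
        rw [← QuotientGroup.eq_one_iff (N := A), QuotientGroup.mk_pow]
        exact hq
      obtain ⟨b, hb, hn, hsq⟩ := h2 x hx2
      rw [sq] at hsq
      refine ⟨x * b, hn, hsq, ?_⟩
      rw [QuotientGroup.mk_mul, (QuotientGroup.eq_one_iff b).mpr hb, mul_one]
    choose e heN heH heQ using hi0
    have hF : ∃ f : G ⧸ A → G, (∀ q, f q ∈ Subgroup.normalizer (H : Set G)) ∧
        (∀ q, (QuotientGroup.mk (f q) : G ⧸ A) = q) ∧
        (∀ q (hq : q ^ 2 = 1), f q * f q ∈ H) ∧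
        (∀ q, q ^ 2 ≠ 1 → f q⁻¹ = (f q)⁻¹) := by
      refine ⟨fun q => if hq : q ^ 2 = 1 then e q hq
        else if q < q⁻¹ then s q else (s q⁻¹)⁻¹, ?_, ?_, ?_, ?_⟩
      · intro q; dsimp only; split_ifs with h1 h2'
        exacts [heN q h1, hsN q, inv_mem (hsN q⁻¹)]
      · intro q; dsimp only; split_ifs with h1 h2'
        · exact heQ q h1
        · exact hsQ q
        · rw [QuotientGroup.mk_inv, hsQ q⁻¹, inv_inv]
      · intro q hq; dsimp only; rw [dif_pos hq]; exact heH q hq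
      · intro q hq; dsimp only
        have hq' : (q⁻¹) ^ 2 ≠ 1 := by
          intro h; rw [inv_pow, inv_eq_one] at h; exact hq h
        rw [dif_neg hq', dif_neg hq]
        have hne : q ≠ q⁻¹ := by
          intro h; apply hq; rw [sq]; nth_rewrite 2 [h]; exact mul_inv_cancel q
        rcases hne.lt_or_gt with hlt | hlt
        · rw [if_neg (by rw [inv_inv]; exact asymm hlt), if_pos hlt, inv_inv]
        · rw [if_pos (by rw [inv_inv]; exact hlt), if_neg (asymm hlt), inv_inv]
    obtain ⟨f, hfN, hfQ, hfSq, hfInv⟩ := hF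
    set U : Set G := (f '' {q | q ≠ 1}) * (H : Set G) with hUdef
    have hUmem : ∀ (q : G ⧸ A) (h : G), q ≠ 1 → h ∈ H → f q * h ∈ U :=
      fun q h hq hh => Set.mul_mem_mul ⟨q, hq, rfl⟩ hh
    have hUelim : ∀ u ∈ U, ∃ q, q ≠ 1 ∧ ∃ h ∈ H, u = f q * h := by
      intro u hu
      obtain ⟨t, ht, h, hh, rfl⟩ := Set.mem_mul.mp hu
      obtain ⟨q, hq, rfl⟩ := ht
      exact ⟨q, hq, h, hh, rfl⟩
    have hfA : ∀ q : G ⧸ A, q ≠ 1 → f q ∉ A := by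
      intro q hq hmem
      apply hq
      rw [← hfQ q]
      exact (QuotientGroup.eq_one_iff _).mpr hmem
    have hconjH : ∀ (q : G ⧸ A) {h : G}, h ∈ H → ∃ h' ∈ H, h * f q = f q * h' := by
      intro q h hh
      exact ⟨(f q)⁻¹ * h * f q, conj_mem_of_normalizer (hfN q) hh, by group⟩
    have hconn : IsCosetGraphConnectionSet H U := by
      have hsub : U⁻¹ ⊆ U := by
        intro u hu
        rw [Set.mem_inv] at hu
        obtain ⟨q, hq, h, hh, he⟩ := hUelim _ hu
        have hu' : u = h⁻¹ * (f q)⁻¹ := by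
          rw [← inv_inv u, he]; group
        by_cases hq2 : q ^ 2 = 1
        · have hk : f q * f q ∈ H := hfSq q hq2
          obtain ⟨h', hh', he'⟩ := hconjH q (inv_mem hh)
          have e : u = f q * (h' * (f q * f q)⁻¹) := by
            rw [hu', ← mul_assoc, ← he']; group
          rw [e]; exact hUmem q _ hq (mul_mem hh' (inv_mem hk))
        · have hfq : f q⁻¹ = (f q)⁻¹ := hfInv q hq2
          obtain ⟨h', hh', he'⟩ := hconjH q⁻¹ (inv_mem hh)
          have hq1 : q⁻¹ ≠ 1 := by simpa using hq
          have e : u = f q⁻¹ * h' := by rw [hu', ← hfq]; exact he'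
          rw [e]; exact hUmem _ _ hq1 hh'
      refine ⟨Set.Subset.antisymm hsub
        (fun u hu => Set.mem_inv.mpr (hsub (Set.inv_mem_inv.mpr hu))), ?_, ?_⟩
      · apply Set.eq_empty_iff_forall_notMem.mpr
        rintro g ⟨hgH, hgU⟩
        obtain ⟨q, hq, h, hh, he⟩ := hUelim _ hgU
        refine hfA q hq (hHA ?_)
        have e : f q = g * h⁻¹ := by rw [he]; group
        rw [e]; exact mul_mem hgH (inv_mem hh)
      · apply Set.Subset.antisymm
        · intro g hg
          rcases Set.mem_mul.mp hg with ⟨v, hv, h₂, hh₂, rfl⟩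
          rcases Set.mem_mul.mp hv with ⟨h₁, hh₁, u, hu, rfl⟩
          rcases hUelim u hu with ⟨q, hq, h₃, hh₃, rfl⟩
          obtain ⟨h', hh', he'⟩ := hconjH q hh₁
          have e : h₁ * (f q * h₃) * h₂ = (h₁ * f q) * (h₃ * h₂) := by group
          rw [e, he', mul_assoc]
          exact hUmem q _ hq (mul_mem hh' (mul_mem hh₃ hh₂))
        · intro u hu
          have e : u = 1 * u * 1 := by group
          rw [e]
          exact Set.mul_mem_mul (Set.mul_mem_mul (one_mem H) hu) (one_mem H)
    refine ⟨U, hconn, ?_, ?_⟩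
    · rintro v ⟨a, ha, rfl⟩
      rw [Set.ncard_eq_zero (Set.toFinite _)]
      apply Set.eq_empty_iff_forall_notMem.mpr
      rintro w ⟨hwS, hadj⟩
      obtain ⟨a', ha', rfl⟩ := hwS
      have hu := ((cosetGraph_adj hconn a a').mp hadj).2
      obtain ⟨q, hq, h, hh, he⟩ := hUelim _ hu
      refine hfA q hq ?_
      have e : f q = a⁻¹ * a' * h⁻¹ := by rw [he]; group
      rw [e]
      exact mul_mem (mul_mem (inv_mem ha) ha') (hHA (inv_mem hh))
    · intro v hv
      obtain ⟨g, rfl⟩ := QuotientGroup.mk_surjective v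
      have hg : g ∉ A := fun h => hv ((mem_codeSet hHA g).mpr h)
      set q₀ : G ⧸ A := (QuotientGroup.mk g : G ⧸ A)⁻¹ with hq₀def
      have hq₀ : q₀ ≠ 1 := by
        rw [hq₀def, Ne, inv_eq_one, QuotientGroup.eq_one_iff]
        exact hg
      have ha₀ : g * f q₀ ∈ A := by
        rw [← QuotientGroup.eq_one_iff (N := A), QuotientGroup.mk_mul, hfQ q₀,
          hq₀def, mul_inv_cancel]
      rw [Set.ncard_eq_one]
      refine ⟨QuotientGroup.mk (g * f q₀), ?_⟩
      ext w
      simp only [Set.mem_setOf_eq, Set.mem_singleton_iff]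
      constructor
      · rintro ⟨⟨y, hy, rfl⟩, hadj⟩
        have hu := ((cosetGraph_adj hconn g y).mp hadj).2
        obtain ⟨q', hq', h, hh, he⟩ := hUelim _ hu
        have hq'e : q' = q₀ := by
          have e1 : q' = (QuotientGroup.mk (f q' * h) : G ⧸ A) := by
            rw [QuotientGroup.mk_mul, hfQ, (QuotientGroup.eq_one_iff h).mpr (hHA hh),
              mul_one]
          have e2 : (QuotientGroup.mk (g⁻¹ * y) : G ⧸ A) = q₀ := by
            rw [QuotientGroup.mk_mul, (QuotientGroup.eq_one_iff y).mpr hy, mul_one,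
              QuotientGroup.mk_inv, hq₀def]
          rw [e1, ← he, e2]
        rw [hq'e] at he
        apply QuotientGroup.eq.mpr
        have e : y⁻¹ * (g * f q₀) = h⁻¹ := by
          have hy' : y = g * (f q₀ * h) := by
            rw [← he]; group
          rw [hy']; group
        rw [e]; exact inv_mem hh
      · rintro rfl
        refine ⟨⟨g * f q₀, ha₀, rfl⟩, ?_⟩
        rw [cosetGraph_adj hconn]
        constructor
        · intro hEq
          have hH' := QuotientGroup.eq.mp hEq
          have e : g⁻¹ * (g * f q₀) = f q₀ := by group
          rw [e] at hH'
          exact hfA q₀ hq₀ (hHA hH')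
        · have e : g⁻¹ * (g * f q₀) = f q₀ * 1 := by group
          rw [e]
          exact hUmem q₀ 1 hq₀ (one_mem H)
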